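/- For a lower hyperspace topology T and ideal 𝒮, the closure operator cl_𝒮^T is idempotent (topological) if and only if cl_{τ(𝒮)}(𝒜) is T-closed whenever 𝒜 is T-closed. -/

import Mathlib

open Set Topology

def IsIdeal {X : Type*} (𝒮 : Set (Set X)) : Prop :=
  ∅ ∈ 𝒮 ∧ (∀ S ∈ 𝒮, ∀ S' ⊆ S, S' ∈ 𝒮) ∧ (∀ S ∈ 𝒮, ∀ S' ∈ 𝒮, S ∪ S' ∈ 𝒮)

def tauS {X : Type*} (𝒮 : Set (Set X)) : TopologicalSpace (Set X) :=
  TopologicalSpace.generateFrom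
    {U | ∃ S ∈ 𝒮, ∃ S' ∈ 𝒮, U = {C : Set X | S ⊆ C ∧ C ∩ S' = ∅}}

def lowerModCl {X : Type*} (𝒮 : Set (Set X)) (T : TopologicalSpace (Set X))
    (𝒜 : Set (Set X)) : Set (Set X) :=
  {A | ∀ S ∈ 𝒮, S ⊆ A → S ∈ @closure (Set X) T 𝒜}

lemma tauS_basis {X : Type*} (𝒮 : Set (Set X)) (hS : IsIdeal 𝒮) :
    @TopologicalSpace.IsTopologicalBasis (Set X) (tauS 𝒮)
      {U | ∃ S ∈ 𝒮, ∃ S' ∈ 𝒮, U = {C : Set X | S ⊆ C ∧ C ∩ S' = ∅}} := by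
  letI : TopologicalSpace (Set X) := tauS 𝒮
  refine ⟨?_, ?_, rfl⟩
  · rintro t₁ ⟨S₁, hS₁, S₁', hS₁', rfl⟩ t₂ ⟨S₂, hS₂, S₂', hS₂', rfl⟩ C ⟨⟨h1, h2⟩, ⟨h3, h4⟩⟩
    refine ⟨{C : Set X | S₁ ∪ S₂ ⊆ C ∧ C ∩ (S₁' ∪ S₂') = ∅},
      ⟨S₁ ∪ S₂, hS.2.2 _ hS₁ _ hS₂, S₁' ∪ S₂', hS.2.2 _ hS₁' _ hS₂', rfl⟩,
      ⟨union_subset h1 h3, by rw [inter_union_distrib_left, h2, h4, union_empty]⟩, ?_⟩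
    rintro D ⟨hD1, hD2⟩
    rw [inter_union_distrib_left, union_empty_iff] at hD2
    exact ⟨⟨subset_union_left.trans hD1, hD2.1⟩, ⟨subset_union_right.trans hD1, hD2.2⟩⟩
  · apply eq_univ_of_forall
    intro C
    exact ⟨{C : Set X | ∅ ⊆ C ∧ C ∩ ∅ = ∅}, ⟨∅, hS.1, ∅, hS.1, rfl⟩,
      ⟨empty_subset _, inter_empty _⟩⟩

lemma lowerModCl_eq {X : Type*} (𝒮 : Set (Set X)) (hS : IsIdeal 𝒮)
    (T : TopologicalSpace (Set X))
    (hT : ∀ 𝒢 : Set (Set X), IsOpen[T] 𝒢 → ∀ A ∈ 𝒢, ∀ B : Set X, A ⊆ B → B ∈ 𝒢)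
    (𝒜 : Set (Set X)) :
    lowerModCl 𝒮 T 𝒜 = @closure (Set X) (tauS 𝒮) (@closure (Set X) T 𝒜) := by
  ext A
  rw [@TopologicalSpace.IsTopologicalBasis.mem_closure_iff (Set X) (tauS 𝒮) _
    (tauS_basis 𝒮 hS) (@closure (Set X) T 𝒜) A]
  constructor
  · rintro h U ⟨S, hSm, S', hS'm, rfl⟩ ⟨hSA, hAS'⟩
    refine ⟨S, ⟨⟨Subset.rfl, ?_⟩, h S hSm hSA⟩⟩
    rw [← subset_empty_iff] at hAS' ⊢
    exact (inter_subset_inter hSA Subset.rfl).trans hAS'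
  · intro h S hSm hSA
    obtain ⟨C, ⟨hSC, -⟩, hC⟩ := h {C : Set X | S ⊆ C ∧ C ∩ ∅ = ∅}
      ⟨S, hSm, ∅, hS.1, rfl⟩ ⟨hSA, inter_empty _⟩
    by_contra hS'
    have hop : IsOpen[T] (@closure (Set X) T 𝒜)ᶜ :=
      (@isClosed_closure (Set X) T 𝒜).isOpen_compl
    exact (hT _ hop S hS' C hSC) hC

theorem stmt_14 {X : Type*} (𝒮 : Set (Set X)) (hS : IsIdeal 𝒮)
    (T : TopologicalSpace (Set X))
    (hT : ∀ 𝒢 : Set (Set X), IsOpen[T] 𝒢 → ∀ A ∈ 𝒢, ∀ B : Set X, A ⊆ B → B ∈ 𝒢) :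
    (∀ 𝒜 : Set (Set X), lowerModCl 𝒮 T (lowerModCl 𝒮 T 𝒜) = lowerModCl 𝒮 T 𝒜) ↔
    (∀ 𝒜 : Set (Set X), IsClosed[T] 𝒜 →
      IsClosed[T] (@closure (Set X) (tauS 𝒮) 𝒜)) := by
  simp only [lowerModCl_eq 𝒮 hS T hT]
  constructor
  · intro h 𝒜 h𝒜
    have key := h 𝒜
    rw [h𝒜.closure_eq] at key
    have h1 : @closure (Set X) T (@closure (Set X) (tauS 𝒮) 𝒜)
        ⊆ @closure (Set X) (tauS 𝒮) 𝒜 := by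
      calc @closure (Set X) T (@closure (Set X) (tauS 𝒮) 𝒜)
          ⊆ @closure (Set X) (tauS 𝒮)
              (@closure (Set X) T (@closure (Set X) (tauS 𝒮) 𝒜)) :=
            @subset_closure (Set X) (tauS 𝒮) _
        _ = @closure (Set X) (tauS 𝒮) 𝒜 := key
    exact @isClosed_of_closure_subset (Set X) T _ h1
  · intro h 𝒜
    have hcl : IsClosed[T] (@closure (Set X) (tauS 𝒮) (@closure (Set X) T 𝒜)) :=
      h _ (@isClosed_closure (Set X) T 𝒜)
    rw [hcl.closure_eq, @closure_closure (Set X) (tauS 𝒮) _]
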